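/- The kernel of the observability matrix of the contact-inertial linear error system (block rows HΦᵏ, k ≥ 0, with H = [0,0,−I,I] and Φ = exp_m(AΔt), Δt ≠ 0, g ≠ 0) is exactly 4-dimensional, spanned by (0,0,w,w) for w ∈ ℝ³ together with (ĝ,0,0,0) where ĝ = g/‖g‖. -/

import Mathlib

open Matrix

def skew (ω : Fin 3 → ℝ) : Matrix (Fin 3) (Fin 3) ℝ :=
  !![0, -ω 2, ω 1; ω 2, 0, -ω 0; -ω 1, ω 0, 0]

def b2m (B : Fin 4 → Fin 4 → Matrix (Fin 3) (Fin 3) ℝ) :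
    Matrix (Fin 4 × Fin 3) (Fin 4 × Fin 3) ℝ :=
  Matrix.of fun i j => B i.1 j.1 i.2 j.2

def Amat (g : Fin 3 → ℝ) : Matrix (Fin 4 × Fin 3) (Fin 4 × Fin 3) ℝ :=
  b2m ![![0, 0, 0, 0], ![skew g, 0, 0, 0], ![0, 1, 0, 0], ![0, 0, 0, 0]]

/-- Measurement matrix H = [0 0 −I I]. -/
def Hmat : Matrix (Fin 3) (Fin 4 × Fin 3) ℝ :=
  Matrix.of fun i j => (![0, 0, -1, 1] j.1 : Matrix (Fin 3) (Fin 3) ℝ) i j.2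

/-- (0,0,w,w) vectors. -/
def vpos (w : Fin 3 → ℝ) : Fin 4 × Fin 3 → ℝ :=
  fun p => ![(0 : Fin 3 → ℝ), 0, w, w] p.1 p.2

/-- (ĝ,0,0,0) with ĝ = g/‖g‖ (Euclidean norm). -/
noncomputable def vyaw (g : Fin 3 → ℝ) : Fin 4 × Fin 3 → ℝ :=
  fun p => ![(Real.sqrt (g 0 ^ 2 + g 1 ^ 2 + g 2 ^ 2))⁻¹ • g, 0, 0, 0] p.1 p.2

lemma b2m_mul (B C : Fin 4 → Fin 4 → Matrix (Fin 3) (Fin 3) ℝ) :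
    b2m B * b2m C = b2m (fun i j => ∑ k, B i k * C k j) := by
  ext ⟨i1, i2⟩ ⟨j1, j2⟩
  simp only [b2m, Matrix.mul_apply, Fintype.sum_prod_type, Matrix.of_apply,
    Matrix.sum_apply]

lemma b2m_congr {B C : Fin 4 → Fin 4 → Matrix (Fin 3) (Fin 3) ℝ} (h : ∀ i j, B i j = C i j) :
    b2m B = b2m C := by
  ext ⟨i1, i2⟩ ⟨j1, j2⟩; simp [b2m, h]

lemma Amat_sq (g : Fin 3 → ℝ) :
    Amat g * Amat g = b2m ![![0,0,0,0], ![0,0,0,0], ![skew g,0,0,0], ![0,0,0,0]] := by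
  rw [Amat, b2m_mul]
  apply b2m_congr
  intro i j
  fin_cases i <;> fin_cases j <;> simp [Fin.sum_univ_four, Matrix.vecHead, Matrix.vecTail]

lemma Amat_cube (g : Fin 3 → ℝ) : Amat g * Amat g * Amat g = 0 := by
  rw [Amat_sq]
  conv_lhs => rw [Amat]
  rw [b2m_mul]
  have : (0 : Matrix (Fin 4 × Fin 3) (Fin 4 × Fin 3) ℝ)
      = b2m ![![0,0,0,0],![0,0,0,0],![0,0,0,0],![0,0,0,0]] := by
    ext ⟨i1, i2⟩ ⟨j1, j2⟩
    fin_cases i1 <;> fin_cases j1 <;> simp [b2m, Matrix.vecHead, Matrix.vecTail]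
  rw [this]
  apply b2m_congr
  intro i j
  fin_cases i <;> fin_cases j <;> simp [Fin.sum_univ_four, Matrix.vecHead, Matrix.vecTail]

lemma Hmat_mulVec (x : Fin 4 × Fin 3 → ℝ) :
    Hmat.mulVec x = fun i => x (3, i) - x (2, i) := by
  funext i
  simp [Hmat, Matrix.mulVec, dotProduct, Fintype.sum_prod_type, Fin.sum_univ_four,
    Matrix.one_apply, Matrix.vecHead, Matrix.vecTail, Finset.mul_sum]
  fin_cases i <;> simp [Fin.sum_univ_three] <;> ring

lemma Amat_mulVec (g : Fin 3 → ℝ) (x : Fin 4 × Fin 3 → ℝ) :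
    (Amat g).mulVec x = fun p =>
      ![(0 : Fin 3 → ℝ), (skew g).mulVec (fun j => x (0, j)), (fun j => x (1, j)), 0] p.1 p.2 := by
  funext ⟨p1, p2⟩
  fin_cases p1 <;>
    simp [Amat, b2m, Matrix.mulVec, dotProduct, Fintype.sum_prod_type, Fin.sum_univ_four,
      Matrix.one_apply, Matrix.vecHead, Matrix.vecTail]

lemma exp_nilp (N : Matrix (Fin 4 × Fin 3) (Fin 4 × Fin 3) ℝ) (h3 : N * N * N = 0) (c : ℝ) :
    NormedSpace.exp (c • N) = 1 + c • N + (c ^ 2 / 2) • (N * N) := by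
  have hN3 : N ^ 3 = 0 := by
    rw [pow_succ, pow_two]; exact h3
  rw [NormedSpace.exp_eq_tsum (𝕂 := ℝ)]; beta_reduce
  rw [tsum_eq_sum (s := Finset.range 3) ?_]
  · rw [Finset.sum_range_succ, Finset.sum_range_succ, Finset.sum_range_succ,
      Finset.sum_range_zero]
    simp [smul_pow, pow_two, smul_smul]
    norm_num
    ring_nf
  · intro n hn
    have h : 3 ≤ n := by simpa using hn
    have : N ^ n = 0 := by
      calc N ^ n = N ^ 3 * N ^ (n - 3) := by rw [← pow_add]; congr 1; omega
      _ = 0 := by rw [hN3, zero_mul]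
    rw [smul_pow, this, smul_zero, smul_zero]

lemma obs_mulVec (g : Fin 3 → ℝ) (Δt : ℝ) (k : ℕ) (x : Fin 4 × Fin 3 → ℝ) :
    (Hmat * NormedSpace.exp (Δt • Amat g) ^ k).mulVec x =
      fun i => (x (3, i) - x (2, i)) - ((k : ℝ) * Δt) * x (1, i)
        - (((k : ℝ) * Δt) ^ 2 / 2) * ((skew g).mulVec (fun j => x (0, j)) i) := by
  have hE : NormedSpace.exp (Δt • Amat g) ^ k
      = 1 + ((k : ℝ) * Δt) • Amat g + (((k : ℝ) * Δt) ^ 2 / 2) • (Amat g * Amat g) := by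
    rw [← Matrix.exp_nsmul, ← Nat.cast_smul_eq_nsmul ℝ, smul_smul, exp_nilp _ (Amat_cube g)]
  rw [← Matrix.mulVec_mulVec, hE]
  rw [Matrix.add_mulVec, Matrix.add_mulVec, Matrix.one_mulVec, Matrix.smul_mulVec,
    Matrix.smul_mulVec, ← Matrix.mulVec_mulVec, Amat_mulVec, Amat_mulVec]
  funext i
  rw [Matrix.mulVec_add, Matrix.mulVec_add, Matrix.mulVec_smul, Matrix.mulVec_smul,
    Hmat_mulVec, Hmat_mulVec, Hmat_mulVec]
  simp [Matrix.vecHead, Matrix.vecTail, Matrix.mulVec, dotProduct]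
  ring

lemma skew_mulVec_self (g : Fin 3 → ℝ) : (skew g).mulVec g = 0 := by
  funext i
  fin_cases i <;>
    simp [skew, Matrix.mulVec, dotProduct, Fin.sum_univ_three, Matrix.vecHead, Matrix.vecTail] <;> ring

lemma skew_ker (g : Fin 3 → ℝ) (hg : g ≠ 0) (a : Fin 3 → ℝ)
    (h : (skew g).mulVec a = 0) : ∃ t : ℝ, a = t • g := by
  have r0 := congrFun h 0
  have r1 := congrFun h 1
  have r2 := congrFun h 2
  simp [skew, Matrix.mulVec, dotProduct, Fin.sum_univ_three, Matrix.vecHead, Matrix.vecTail] at r0 r1 r2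
  obtain ⟨i, hi⟩ := Function.ne_iff.mp hg
  simp only [Pi.zero_apply] at hi
  fin_cases i
  · have hi' : g 0 ≠ 0 := by simpa using hi
    refine ⟨a 0 / g 0, funext fun j => ?_⟩
    fin_cases j <;> simp [Pi.smul_apply, smul_eq_mul] <;> field_simp <;> linarith [r0, r1, r2]
  · have hi' : g 1 ≠ 0 := by simpa using hi
    refine ⟨a 1 / g 1, funext fun j => ?_⟩
    fin_cases j <;> simp [Pi.smul_apply, smul_eq_mul] <;> field_simp <;> linarith [r0, r1, r2]
  · have hi' : g 2 ≠ 0 := by simpa using hi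
    refine ⟨a 2 / g 2, funext fun j => ?_⟩
    fin_cases j <;> simp [Pi.smul_apply, smul_eq_mul] <;> field_simp <;> linarith [r0, r1, r2]

noncomputable def phiMap (g : Fin 3 → ℝ) : ((Fin 3 → ℝ) × ℝ) →ₗ[ℝ] (Fin 4 × Fin 3 → ℝ) where
  toFun := fun wt => vpos wt.1 + wt.2 • vyaw g
  map_add' := by
    intro u v
    funext ⟨p1, p2⟩
    fin_cases p1 <;> simp [vpos, vyaw, Matrix.vecHead, Matrix.vecTail] <;> ring
  map_smul' := by
    intro c u
    funext ⟨p1, p2⟩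
    fin_cases p1 <;> simp [vpos, vyaw, Matrix.vecHead, Matrix.vecTail] <;> ring

lemma gnorm_ne (g : Fin 3 → ℝ) (hg : g ≠ 0) :
    Real.sqrt (g 0 ^ 2 + g 1 ^ 2 + g 2 ^ 2) ≠ 0 := by
  obtain ⟨i, hi⟩ := Function.ne_iff.mp hg
  simp only [Pi.zero_apply] at hi
  have hpos : 0 < g 0 ^ 2 + g 1 ^ 2 + g 2 ^ 2 := by
    fin_cases i <;> simp at hi <;> positivity
  exact ne_of_gt (Real.sqrt_pos.mpr hpos)

lemma mem_ker_iff (g : Fin 3 → ℝ) (Δt : ℝ) (hΔt : Δt ≠ 0) (x : Fin 4 × Fin 3 → ℝ) :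
    (x ∈ ⨅ k : ℕ,
        LinearMap.ker (Hmat * NormedSpace.exp (Δt • Amat g) ^ k).mulVecLin) ↔
      ((∀ j, x (1, j) = 0) ∧ (∀ j, x (3, j) = x (2, j)) ∧
        (skew g).mulVec (fun j => x (0, j)) = 0) := by
  simp only [Submodule.mem_iInf, LinearMap.mem_ker, Matrix.mulVecLin_apply]
  constructor
  · intro h
    set s : Fin 3 → ℝ := (skew g).mulVec (fun j => x (0, j)) with hs
    have hk : ∀ (k : ℕ) (i : Fin 3),
        (x (3, i) - x (2, i)) - ((k : ℝ) * Δt) * x (1, i)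
          - (((k : ℝ) * Δt) ^ 2 / 2) * s i = 0 := by
      intro k i
      have := congrFun (h k) i
      rwa [obs_mulVec] at this
    have h0 : ∀ i, x (3, i) - x (2, i) = 0 := by
      intro i; have := hk 0 i; push_cast at this; linarith
    have hS : ∀ i, s i = 0 := by
      intro i
      have a1 := hk 1 i
      have a2 := hk 2 i
      have a0 := h0 i
      push_cast at a1 a2
      have hq : Δt ^ 2 * s i = 0 := by linear_combination 2 * a1 - a2 - a0
      have : Δt ^ 2 ≠ 0 := pow_ne_zero 2 hΔt
      exact (mul_eq_zero.mp hq).resolve_left this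
    have hb : ∀ i, x (1, i) = 0 := by
      intro i
      have a1 := hk 1 i
      have a0 := h0 i
      push_cast at a1
      have := hS i
      have hq : Δt * x (1, i) = 0 := by linear_combination a0 - a1 - (Δt ^ 2 / 2) * this
      exact (mul_eq_zero.mp hq).resolve_left hΔt
    exact ⟨hb, fun j => by linarith [h0 j], funext hS⟩
  · rintro ⟨hb, hcd, hs⟩ k
    rw [obs_mulVec]
    funext i
    simp [hb i, hcd i, hs]

lemma vpos_zero : vpos 0 = 0 := by
  funext ⟨p1, p2⟩
  fin_cases p1 <;> simp [vpos, Matrix.vecHead, Matrix.vecTail]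

lemma phi_inj (g : Fin 3 → ℝ) (hg : g ≠ 0) : Function.Injective (phiMap g) := by
  rw [← LinearMap.ker_eq_bot, Submodule.eq_bot_iff]
  rintro ⟨w, t⟩ h
  rw [LinearMap.mem_ker] at h
  have hw : ∀ j, w j = 0 := by
    intro j
    have := congrFun h (2, j)
    simpa [phiMap, vpos, vyaw, Matrix.vecHead, Matrix.vecTail] using this
  obtain ⟨i, hi⟩ := Function.ne_iff.mp hg
  simp only [Pi.zero_apply] at hi
  have ht : t = 0 := by
    have := congrFun h (0, i)
    simp [phiMap, vpos, vyaw, Matrix.vecHead, Matrix.vecTail] at this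
    rcases this with h1 | h1 | h1
    · exact h1
    · exact absurd h1 (gnorm_ne g hg)
    · exact absurd h1 hi
  ext <;> simp [hw, ht]

/-- The kernel of the observability matrix is exactly the 4-dimensional subspace
spanned by the (0,0,w,w) together with (ĝ,0,0,0). -/
theorem observability_kernel (g : Fin 3 → ℝ) (hg : g ≠ 0) (Δt : ℝ) (hΔt : Δt ≠ 0) :
    (⨅ k : ℕ,
        LinearMap.ker (Hmat * NormedSpace.exp (Δt • Amat g) ^ k).mulVecLin) =
      Submodule.span ℝ ({x | ∃ w : Fin 3 → ℝ, x = vpos w} ∪ {vyaw g}) ∧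
    Module.finrank ℝ
      ↥(⨅ k : ℕ,
        LinearMap.ker (Hmat * NormedSpace.exp (Δt • Amat g) ^ k).mulVecLin) = 4 := by
  have hn : Real.sqrt (g 0 ^ 2 + g 1 ^ 2 + g 2 ^ 2) ≠ 0 := gnorm_ne g hg
  have hKrange : (⨅ k : ℕ,
      LinearMap.ker (Hmat * NormedSpace.exp (Δt • Amat g) ^ k).mulVecLin)
      = LinearMap.range (phiMap g) := by
    apply le_antisymm
    · intro x hx
      rw [mem_ker_iff g Δt hΔt] at hx
      obtain ⟨hb, hcd, hs⟩ := hx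
      obtain ⟨t, ht⟩ := skew_ker g hg _ hs
      refine ⟨(fun j => x (2, j), t * Real.sqrt (g 0 ^ 2 + g 1 ^ 2 + g 2 ^ 2)), ?_⟩
      funext ⟨p1, p2⟩
      fin_cases p1
      · have h0 := congrFun ht p2
        simp only [Pi.smul_apply, smul_eq_mul] at h0
        simp [phiMap, vpos, vyaw, Matrix.vecHead, Matrix.vecTail, h0]
        field_simp
      · simp [phiMap, vpos, vyaw, Matrix.vecHead, Matrix.vecTail, hb p2]
      · simp [phiMap, vpos, vyaw, Matrix.vecHead, Matrix.vecTail]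
      · simp [phiMap, vpos, vyaw, Matrix.vecHead, Matrix.vecTail, hcd p2]
    · rintro x ⟨⟨w, t⟩, rfl⟩
      rw [mem_ker_iff g Δt hΔt]
      refine ⟨fun j => ?_, fun j => ?_, ?_⟩
      · simp [phiMap, vpos, vyaw, Matrix.vecHead, Matrix.vecTail]
      · simp [phiMap, vpos, vyaw, Matrix.vecHead, Matrix.vecTail]
      · have : (fun j => (phiMap g (w, t)) (0, j))
            = (t * (Real.sqrt (g 0 ^ 2 + g 1 ^ 2 + g 2 ^ 2))⁻¹) • g := by
          funext j
          simp [phiMap, vpos, vyaw, Matrix.vecHead, Matrix.vecTail]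
          ring
        rw [this, Matrix.mulVec_smul, skew_mulVec_self, smul_zero]
  have hspan : LinearMap.range (phiMap g)
      = Submodule.span ℝ ({x | ∃ w : Fin 3 → ℝ, x = vpos w} ∪ {vyaw g}) := by
    apply le_antisymm
    · rintro x ⟨⟨w, t⟩, rfl⟩
      have : phiMap g (w, t) = vpos w + t • vyaw g := rfl
      rw [this]
      exact Submodule.add_mem _
        (Submodule.subset_span (Or.inl ⟨w, rfl⟩))
        (Submodule.smul_mem _ _ (Submodule.subset_span (Or.inr rfl)))
    · rw [Submodule.span_le]
      rintro x (⟨w, rfl⟩ | rfl)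
      · exact ⟨(w, 0), by show vpos w + (0:ℝ) • vyaw g = vpos w; simp⟩
      · exact ⟨(0, 1), by show vpos 0 + (1:ℝ) • vyaw g = vyaw g; simp [vpos_zero]⟩
  refine ⟨hKrange.trans hspan, ?_⟩
  rw [hKrange, LinearMap.finrank_range_of_inj (phi_inj g hg)]
  simp [Module.finrank_prod]
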